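/- With R(q) the quantum trigonometric R-matrix (R(q) = 1 + Σ_{k,l}[(q-q⁻¹)θ(l-k) + ((s-s⁻¹)²/2)δ_{k,l}]E_{k,l}⊗E_{l,k}, q = s², over a characteristic-zero field), the following transposed Yang–Baxter relation holds in Mat_N⊗Mat_N⊗Mat_N: R₂₃(q)·R₁₃^{t₁}(q⁻¹)·R₁₂^{t₁}(q⁻¹) = R₁₂^{t₁}(q⁻¹)·R₁₃^{t₁}(q⁻¹)·R₂₃(q), where t₁ denotes partial transposition in the first tensor factor. -/

import Mathlib

open Matrix Kronecker

/-- The step function θ with values in a field: θ(x)=1 for x>0, θ(0)=1/2, θ(x)=0 for x<0. -/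
noncomputable def thetaK (K : Type*) [Field K] (x : ℤ) : K :=
  if 0 < x then 1 else if x = 0 then 2⁻¹ else 0

/-- The quantum trigonometric R-matrix
`R(q) = 1 + Σ_{k,l} [(q-q⁻¹)θ(l-k) + ((s-s⁻¹)²/2)δ_{k,l}]·E_{k,l} ⊗ E_{l,k}`, with `q = s²`. -/
noncomputable def Rq (N : ℕ) (K : Type*) [Field K] (q s : K) :
    Matrix (Fin N × Fin N) (Fin N × Fin N) K :=
  1 + ∑ k : Fin N, ∑ l : Fin N,
    ((q - q⁻¹) * thetaK K ((l : ℤ) - (k : ℤ))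
        + (s - s⁻¹) ^ 2 / 2 * (if k = l then 1 else 0)) •
      (Matrix.single k l (1 : K) ⊗ₖ Matrix.single l k (1 : K))

/-- Embedding of an N²×N² matrix into tensor factors 1 and 2 of Mat_N⊗Mat_N⊗Mat_N. -/
def emb12 {N : ℕ} {K : Type*} [Field K]
    (M : Matrix (Fin N × Fin N) (Fin N × Fin N) K) :
    Matrix (Fin N × Fin N × Fin N) (Fin N × Fin N × Fin N) K :=
  Matrix.of fun p q => M (p.1, p.2.1) (q.1, q.2.1) * (if p.2.2 = q.2.2 then 1 else 0)

/-- Embedding into tensor factors 2 and 3. -/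
def emb23 {N : ℕ} {K : Type*} [Field K]
    (M : Matrix (Fin N × Fin N) (Fin N × Fin N) K) :
    Matrix (Fin N × Fin N × Fin N) (Fin N × Fin N × Fin N) K :=
  Matrix.of fun p q => (if p.1 = q.1 then 1 else 0) * M (p.2.1, p.2.2) (q.2.1, q.2.2)

/-- Embedding into tensor factors 1 and 3. -/
def emb13 {N : ℕ} {K : Type*} [Field K]
    (M : Matrix (Fin N × Fin N) (Fin N × Fin N) K) :
    Matrix (Fin N × Fin N × Fin N) (Fin N × Fin N × Fin N) K :=
  Matrix.of fun p q => M (p.1, p.2.2) (q.1, q.2.2) * (if p.2.1 = q.2.1 then 1 else 0)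

/-- Partial transpose in the first tensor factor of an N³×N³ matrix. -/
def trpt1 {N : ℕ} {K : Type*} [Field K]
    (M : Matrix (Fin N × Fin N × Fin N) (Fin N × Fin N × Fin N) K) :
    Matrix (Fin N × Fin N × Fin N) (Fin N × Fin N × Fin N) K :=
  Matrix.of fun p q => M (q.1, p.2) (p.1, q.2)

/-- Partial transpose in the second tensor factor of an N³×N³ matrix. -/
def trpt2 {N : ℕ} {K : Type*} [Field K]
    (M : Matrix (Fin N × Fin N × Fin N) (Fin N × Fin N × Fin N) K) :
    Matrix (Fin N × Fin N × Fin N) (Fin N × Fin N × Fin N) K :=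
  Matrix.of fun p q => M (p.1, q.2.1, p.2.2) (q.1, p.2.1, q.2.2)


noncomputable def Gc (K : Type*) [Field K] (q s : K) (a b : ℤ) : K :=
  (q - q⁻¹) * thetaK K (b - a) + (s - s⁻¹) ^ 2 / 2 * (if a = b then 1 else 0)

lemma Rq_apply (N : ℕ) (K : Type*) [Field K] (q s : K) (a b c d : Fin N) :
    Rq N K q s (a, b) (c, d) =
      (if a = c ∧ b = d then 1 else 0)
        + (if b = c ∧ a = d then Gc K q s (a : ℤ) (b : ℤ) else 0) := by
  rw [Rq]
  simp only [Matrix.add_apply, Matrix.sum_apply, Matrix.smul_apply,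
    Matrix.kroneckerMap_apply, Matrix.single, Matrix.of_apply,
    Matrix.one_apply, Prod.mk.injEq, smul_eq_mul, mul_ite, mul_one, mul_zero, ite_and]
  rw [Finset.sum_eq_single a]
  · rw [Finset.sum_eq_single b]
    · simp only [eq_self_iff_true, if_true]
      by_cases h1 : b = c <;> by_cases h2 : a = d <;>
        simp [h1, h2, Gc] <;> split_ifs <;> first | rfl | (simp_all; omega) | omega
    · intro x _ hx
      simp [hx]
    · simp
  · intro x _ hx
    simp [hx]
  · simp

section
variable {N : ℕ} {K : Type*} [Field K] (q s : K)

lemma emb23_row (i j k : Fin N) (m : Fin N × Fin N × Fin N) :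
    emb23 (Rq N K q s) (i, j, k) m =
      (if m = (i, j, k) then 1 else 0) + (if m = (i, k, j) then Gc K q s (j : ℤ) (k : ℤ) else 0) := by
  obtain ⟨m1, m2, m3⟩ := m
  simp only [emb23, Matrix.of_apply, Rq_apply, Prod.mk.injEq]
  split_ifs <;> first | (exfalso; omega) | rfl | ring

lemma emb12_row (i j k : Fin N) (m : Fin N × Fin N × Fin N) :
    emb12 (Rq N K q s) (i, j, k) m =
      (if m = (i, j, k) then 1 else 0) + (if m = (j, i, k) then Gc K q s (i : ℤ) (j : ℤ) else 0) := by
  obtain ⟨m1, m2, m3⟩ := m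
  simp only [emb12, Matrix.of_apply, Rq_apply, Prod.mk.injEq]
  split_ifs <;> first | (exfalso; omega) | rfl | ring

lemma emb13_row (i j k : Fin N) (m : Fin N × Fin N × Fin N) :
    emb13 (Rq N K q s) (i, j, k) m =
      (if m = (i, j, k) then 1 else 0) + (if m = (k, j, i) then Gc K q s (i : ℤ) (k : ℤ) else 0) := by
  obtain ⟨m1, m2, m3⟩ := m
  simp only [emb13, Matrix.of_apply, Rq_apply, Prod.mk.injEq]
  split_ifs <;> first | (exfalso; omega) | rfl | ring

lemma sum_row {n : Type*} [Fintype n] [DecidableEq n] (u v : n) (x y : K) (f : n → K) :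
    (∑ m, ((if m = u then x else 0) + (if m = v then y else 0)) * f m) = x * f u + y * f v := by
  simp [add_mul, ite_mul, Finset.sum_add_distrib]

lemma mul_row {n : Type*} [Fintype n] [DecidableEq n] (X Y : Matrix n n K) (p u v : n) (x y : K)
    (hX : ∀ m, X p m = (if m = u then x else 0) + (if m = v then y else 0)) (c : n) :
    (X * Y) p c = x * Y u c + y * Y v c := by
  rw [Matrix.mul_apply]
  simp only [hX]
  exact sum_row u v x y _

lemma trpt1_trpt1 (M : Matrix (Fin N × Fin N × Fin N) (Fin N × Fin N × Fin N) K) :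
    trpt1 (trpt1 M) = M := rfl

lemma trpt1_emb23_mul (X : Matrix (Fin N × Fin N) (Fin N × Fin N) K)
    (M : Matrix (Fin N × Fin N × Fin N) (Fin N × Fin N × Fin N) K) :
    trpt1 (emb23 X * M) = emb23 X * trpt1 M := by
  ext ⟨p1, p2, p3⟩ ⟨q1, q2, q3⟩
  simp [trpt1, emb23, Matrix.mul_apply, Fintype.sum_prod_type, ite_mul, mul_ite]

lemma trpt1_mul_emb23 (X : Matrix (Fin N × Fin N) (Fin N × Fin N) K)
    (M : Matrix (Fin N × Fin N × Fin N) (Fin N × Fin N × Fin N) K) :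
    trpt1 (M * emb23 X) = trpt1 M * emb23 X := by
  ext ⟨p1, p2, p3⟩ ⟨q1, q2, q3⟩
  simp [trpt1, emb23, Matrix.mul_apply, Fintype.sum_prod_type, ite_mul, mul_ite]

lemma trpt1_emb12_mul_emb13 (X Y : Matrix (Fin N × Fin N) (Fin N × Fin N) K) :
    trpt1 (emb12 X * emb13 Y) = trpt1 (emb13 Y) * trpt1 (emb12 X) := by
  ext ⟨p1, p2, p3⟩ ⟨q1, q2, q3⟩
  simp [trpt1, emb12, emb13, Matrix.mul_apply, Fintype.sum_prod_type, ite_mul, mul_ite]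
  ring_nf
  congr 1
  ext r
  ring

lemma trpt1_emb13_mul_emb12 (X Y : Matrix (Fin N × Fin N) (Fin N × Fin N) K) :
    trpt1 (emb13 X * emb12 Y) = trpt1 (emb12 Y) * trpt1 (emb13 X) := by
  ext ⟨p1, p2, p3⟩ ⟨q1, q2, q3⟩
  simp [trpt1, emb12, emb13, Matrix.mul_apply, Fintype.sum_prod_type, ite_mul, mul_ite]
  ring_nf
  congr 1
  ext r
  ring

end

lemma Gc_of_lt {K : Type*} [Field K] {a b : ℤ} (h : a < b) (q s : K) :
    Gc K q s a b = q - q⁻¹ := by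
  have h1 : (0:ℤ) < b - a := by omega
  have h2 : a ≠ b := by omega
  simp [Gc, thetaK, h1, h2, not_le.mpr h]

lemma Gc_of_gt {K : Type*} [Field K] {a b : ℤ} (h : b < a) (q s : K) :
    Gc K q s a b = 0 := by
  have h1 : ¬ (0:ℤ) < b - a := by omega
  have h2 : ¬ (b - a = 0) := by omega
  have h3 : ¬ (a = b) := by omega
  simp [Gc, thetaK, h1, h2, h3, not_lt.mpr h.le]

lemma Gc_self {K : Type*} [Field K] (a : ℤ) (q s : K) :
    Gc K q s a a = (q - q⁻¹) * 2⁻¹ + (s - s⁻¹) ^ 2 / 2 := by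
  simp [Gc, thetaK]


set_option maxHeartbeats 2000000 in
lemma core (N : ℕ) (K : Type*) [Field K] [CharZero K] (s : K) (hs : s ≠ 0) (q : K)
    (hq : q = s ^ 2) :
    emb23 (Rq N K q s) * (emb12 (Rq N K q⁻¹ s⁻¹) * emb13 (Rq N K q⁻¹ s⁻¹)) =
      emb13 (Rq N K q⁻¹ s⁻¹) * (emb12 (Rq N K q⁻¹ s⁻¹) * emb23 (Rq N K q s)) := by
  ext ⟨i, j, k⟩ ⟨i', j', k'⟩
  rw [mul_row _ _ _ _ _ _ _ (emb23_row q s i j k),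
      mul_row _ _ _ _ _ _ _ (emb12_row q⁻¹ s⁻¹ i j k),
      mul_row _ _ _ _ _ _ _ (emb12_row q⁻¹ s⁻¹ i k j),
      mul_row _ _ _ _ _ _ _ (emb13_row q⁻¹ s⁻¹ i j k),
      mul_row _ _ _ _ _ _ _ (emb12_row q⁻¹ s⁻¹ i j k),
      mul_row _ _ _ _ _ _ _ (emb12_row q⁻¹ s⁻¹ k j i)]
  simp only [emb13_row q⁻¹ s⁻¹, emb23_row q s]
  subst hq
  rcases lt_trichotomy (i : ℤ) (j : ℤ) with hij | hij | hij
  · rcases lt_trichotomy (j : ℤ) (k : ℤ) with hjk | hjk | hjk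
    · rcases lt_trichotomy (i : ℤ) (k : ℤ) with hik | hik | hik
      · simp only [Gc_of_lt hij, Gc_of_gt hij, Gc_of_lt hjk, Gc_of_gt hjk, Gc_of_lt hik, Gc_of_gt hik, Gc_self, Prod.mk.injEq, inv_inv]
        split_ifs <;> first | (exfalso; omega) | ring1 | (field_simp [hs]; ring1) | (field_simp [hs]; rw [div_eq_iff (by simp [hs])]; ring1) | (field_simp [hs]; rw [eq_div_iff (by simp [hs])]; ring1)
      · exfalso; omega
      · exfalso; omega
    · rcases lt_trichotomy (i : ℤ) (k : ℤ) with hik | hik | hik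
      · simp only [Gc_of_lt hij, Gc_of_gt hij, hjk, Gc_of_lt hik, Gc_of_gt hik, Gc_self, Prod.mk.injEq, inv_inv]
        split_ifs <;> first | (exfalso; omega) | ring1 | (field_simp [hs]; ring1) | (field_simp [hs]; rw [div_eq_iff (by simp [hs])]; ring1) | (field_simp [hs]; rw [eq_div_iff (by simp [hs])]; ring1)
      · exfalso; omega
      · exfalso; omega
    · rcases lt_trichotomy (i : ℤ) (k : ℤ) with hik | hik | hik
      · simp only [Gc_of_lt hij, Gc_of_gt hij, Gc_of_lt hjk, Gc_of_gt hjk, Gc_of_lt hik, Gc_of_gt hik, Gc_self, Prod.mk.injEq, inv_inv]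
        split_ifs <;> first | (exfalso; omega) | ring1 | (field_simp [hs]; ring1) | (field_simp [hs]; rw [div_eq_iff (by simp [hs])]; ring1) | (field_simp [hs]; rw [eq_div_iff (by simp [hs])]; ring1)
      · simp only [Gc_of_lt hij, Gc_of_gt hij, Gc_of_lt hjk, Gc_of_gt hjk, hik, Gc_self, Prod.mk.injEq, inv_inv]
        split_ifs <;> first | (exfalso; omega) | ring1 | (field_simp [hs]; ring1) | (field_simp [hs]; rw [div_eq_iff (by simp [hs])]; ring1) | (field_simp [hs]; rw [eq_div_iff (by simp [hs])]; ring1)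
      · simp only [Gc_of_lt hij, Gc_of_gt hij, Gc_of_lt hjk, Gc_of_gt hjk, Gc_of_lt hik, Gc_of_gt hik, Gc_self, Prod.mk.injEq, inv_inv]
        split_ifs <;> first | (exfalso; omega) | ring1 | (field_simp [hs]; ring1) | (field_simp [hs]; rw [div_eq_iff (by simp [hs])]; ring1) | (field_simp [hs]; rw [eq_div_iff (by simp [hs])]; ring1)
  · rcases lt_trichotomy (j : ℤ) (k : ℤ) with hjk | hjk | hjk
    · rcases lt_trichotomy (i : ℤ) (k : ℤ) with hik | hik | hik
      · simp only [hij, Gc_of_lt hjk, Gc_of_gt hjk, Gc_of_lt hik, Gc_of_gt hik, Gc_self, Prod.mk.injEq, inv_inv]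
        split_ifs <;> first | (exfalso; omega) | ring1 | (field_simp [hs]; ring1) | (field_simp [hs]; rw [div_eq_iff (by simp [hs])]; ring1) | (field_simp [hs]; rw [eq_div_iff (by simp [hs])]; ring1)
      · exfalso; omega
      · exfalso; omega
    · rcases lt_trichotomy (i : ℤ) (k : ℤ) with hik | hik | hik
      · exfalso; omega
      · simp only [hij, hjk, hik, Gc_self, Prod.mk.injEq, inv_inv]
        split_ifs <;> first | (exfalso; omega) | ring1 | (field_simp [hs]; ring1) | (field_simp [hs]; rw [div_eq_iff (by simp [hs])]; ring1) | (field_simp [hs]; rw [eq_div_iff (by simp [hs])]; ring1)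
      · exfalso; omega
    · rcases lt_trichotomy (i : ℤ) (k : ℤ) with hik | hik | hik
      · exfalso; omega
      · exfalso; omega
      · simp only [hij, Gc_of_lt hjk, Gc_of_gt hjk, Gc_of_lt hik, Gc_of_gt hik, Gc_self, Prod.mk.injEq, inv_inv]
        split_ifs <;> first | (exfalso; omega) | ring1 | (field_simp [hs]; ring1) | (field_simp [hs]; rw [div_eq_iff (by simp [hs])]; ring1) | (field_simp [hs]; rw [eq_div_iff (by simp [hs])]; ring1)
  · rcases lt_trichotomy (j : ℤ) (k : ℤ) with hjk | hjk | hjk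
    · rcases lt_trichotomy (i : ℤ) (k : ℤ) with hik | hik | hik
      · simp only [Gc_of_lt hij, Gc_of_gt hij, Gc_of_lt hjk, Gc_of_gt hjk, Gc_of_lt hik, Gc_of_gt hik, Gc_self, Prod.mk.injEq, inv_inv]
        split_ifs <;> first | (exfalso; omega) | ring1 | (field_simp [hs]; ring1) | (field_simp [hs]; rw [div_eq_iff (by simp [hs])]; ring1) | (field_simp [hs]; rw [eq_div_iff (by simp [hs])]; ring1)
      · simp only [Gc_of_lt hij, Gc_of_gt hij, Gc_of_lt hjk, Gc_of_gt hjk, hik, Gc_self, Prod.mk.injEq, inv_inv]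
        split_ifs <;> first | (exfalso; omega) | ring1 | (field_simp [hs]; ring1) | (field_simp [hs]; rw [div_eq_iff (by simp [hs])]; ring1) | (field_simp [hs]; rw [eq_div_iff (by simp [hs])]; ring1)
      · simp only [Gc_of_lt hij, Gc_of_gt hij, Gc_of_lt hjk, Gc_of_gt hjk, Gc_of_lt hik, Gc_of_gt hik, Gc_self, Prod.mk.injEq, inv_inv]
        split_ifs <;> first | (exfalso; omega) | ring1 | (field_simp [hs]; ring1) | (field_simp [hs]; rw [div_eq_iff (by simp [hs])]; ring1) | (field_simp [hs]; rw [eq_div_iff (by simp [hs])]; ring1)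
    · rcases lt_trichotomy (i : ℤ) (k : ℤ) with hik | hik | hik
      · exfalso; omega
      · exfalso; omega
      · simp only [Gc_of_lt hij, Gc_of_gt hij, hjk, Gc_of_lt hik, Gc_of_gt hik, Gc_self, Prod.mk.injEq, inv_inv]
        split_ifs <;> first | (exfalso; omega) | ring1 | (field_simp [hs]; ring1) | (field_simp [hs]; rw [div_eq_iff (by simp [hs])]; ring1) | (field_simp [hs]; rw [eq_div_iff (by simp [hs])]; ring1)
    · rcases lt_trichotomy (i : ℤ) (k : ℤ) with hik | hik | hik
      · exfalso; omega
      · exfalso; omega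
      · simp only [Gc_of_lt hij, Gc_of_gt hij, Gc_of_lt hjk, Gc_of_gt hjk, Gc_of_lt hik, Gc_of_gt hik, Gc_self, Prod.mk.injEq, inv_inv]
        split_ifs <;> first | (exfalso; omega) | ring1 | (field_simp [hs]; ring1) | (field_simp [hs]; rw [div_eq_iff (by simp [hs])]; ring1) | (field_simp [hs]; rw [eq_div_iff (by simp [hs])]; ring1)

/-- the transposed Yang–Baxter relation
`R₂₃(q)·R₁₃^{t₁}(q⁻¹)·R₁₂^{t₁}(q⁻¹) = R₁₂^{t₁}(q⁻¹)·R₁₃^{t₁}(q⁻¹)·R₂₃(q)`. -/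
theorem transposed_yang_baxter (N : ℕ) (hN : 1 ≤ N)
    (K : Type*) [Field K] [CharZero K] (s : K) (hs : s ≠ 0) (q : K) (hq : q = s ^ 2) :
    emb23 (Rq N K q s) * trpt1 (emb13 (Rq N K q⁻¹ s⁻¹)) * trpt1 (emb12 (Rq N K q⁻¹ s⁻¹)) =
      trpt1 (emb12 (Rq N K q⁻¹ s⁻¹)) * trpt1 (emb13 (Rq N K q⁻¹ s⁻¹)) * emb23 (Rq N K q s) := by
  rw [Matrix.mul_assoc, ← trpt1_emb12_mul_emb13 (Rq N K q⁻¹ s⁻¹) (Rq N K q⁻¹ s⁻¹),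
    ← trpt1_emb23_mul (Rq N K q s), core N K s hs q hq, ← Matrix.mul_assoc,
    trpt1_mul_emb23, trpt1_emb13_mul_emb12]
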